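/- Fix c0 > 0, 0 < d0 ≤ α0 ≤ d1, x0 = t0^{1/d0} where t0 minimizes h(t) = (c0·t − 1)·ln t − 1 over [1, ∞), and v0 = h(x0^{d1}). Let h* be the restriction of h to [t0, ∞), with generalized inverse (h*)^←. Then for any v with v0 ≤ v < u < ∞ and any α ∈ [d0, d1], ∫_{x0}^∞ [h*(y^α)]ᵥᵘ dF_W*(y; α0) = v + ∫ᵥᵘ exp(−c0·((h*)^←(t))^{α0/α}) dt, where F_W*(x; α0) = 1 − exp(−c0·x^{α0}) for x > x0 and F_W*(x; α0) = 0 for x ≤ x0 is the distribution of the censored variable X* = max(X, x0). -/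

import Mathlib

open Real Set MeasureTheory

/-- `h t = (c0 t - 1) log t - 1`. -/
noncomputable def h (c0 t : ℝ) : ℝ := (c0 * t - 1) * Real.log t - 1

/-- Generalized inverse `(h*)^←(y) = inf {t ≥ t0 : h t ≥ y}` of the restriction of
`h` to `[t0, ∞)`. -/
noncomputable def hstarInv (c0 t0 y : ℝ) : ℝ := sInf {t : ℝ | t0 ≤ t ∧ y ≤ h c0 t}

/-- Truncation `[z]ᵥᵘ = min (max z v) u`. -/
noncomputable def trunc (v u z : ℝ) : ℝ := min (max z v) u

lemma h_strictConvex {c0 : ℝ} (hc0 : 0 < c0) : StrictConvexOn ℝ (Ici (1:ℝ)) (h c0) := by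
  have h1 : StrictConvexOn ℝ (Ici (1:ℝ)) (fun x : ℝ => c0 * (x * Real.log x)) := by
    have hb := strictConvexOn_mul_log.subset (Ici_subset_Ici.mpr zero_le_one) (convex_Ici 1)
    refine ⟨hb.1, fun x hx y hy hxy a b ha hb' hab => ?_⟩
    have key := hb.2 hx hy hxy ha hb' hab
    simp only [smul_eq_mul] at *
    nlinarith [key]
  have h2 : StrictConvexOn ℝ (Ici (1:ℝ)) (fun x : ℝ => -Real.log x) := by
    exact (strictConcaveOn_log_Ioi.subset
      (fun x (hx : (1:ℝ) ≤ x) => lt_of_lt_of_le one_pos hx) (convex_Ici 1)).neg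
  have h3 := (h1.add h2).add_convexOn (convexOn_const (-1 : ℝ) (convex_Ici 1))
  have : h c0 = fun t : ℝ => (c0 * (t * Real.log t) + -Real.log t) + -1 := by
    funext t; simp only [h]; ring
  rw [this]; exact h3

lemma h_strictMonoOn {c0 t0 : ℝ} (hc0 : 0 < c0) (ht0 : 1 ≤ t0)
    (hmin : ∀ t ∈ Ici (1:ℝ), h c0 t0 ≤ h c0 t) : StrictMonoOn (h c0) (Ici t0) := by
  have hcv := h_strictConvex hc0
  intro a ha b hb hab
  simp only [mem_Ici] at ha hb
  have ha1 : (1:ℝ) ≤ a := le_trans ht0 ha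
  have hb1 : (1:ℝ) ≤ b := le_trans ht0 hb
  have ht0b : t0 ≠ b := by intro e; rw [← e] at hab; exact absurd ha (not_le.mpr (hab))
  rcases eq_or_lt_of_le ha with h0 | h0
  · -- a = t0
    rw [← h0]
    rcases lt_or_ge (h c0 t0) (h c0 b) with hlt | hle
    · exact hlt
    have heq : h c0 b = h c0 t0 := le_antisymm hle (hmin b hb1)
    exfalso
    have key := hcv.2 (mem_Ici.mpr ht0) (mem_Ici.mpr hb1) ht0b
      (by norm_num : (0:ℝ) < 1/2) (by norm_num : (0:ℝ) < 1/2) (by norm_num)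
    rw [heq] at key
    simp only [smul_eq_mul] at key
    have hm1 : (1:ℝ) ≤ (1/2 : ℝ) • t0 + (1/2 : ℝ) • b := by
      simp only [smul_eq_mul]; linarith
    have := hmin _ (mem_Ici.mpr hm1)
    simp only [smul_eq_mul] at this
    linarith [key]
  · -- t0 < a < b
    have hden : (0:ℝ) < b - t0 := by linarith
    set lam := (b - a) / (b - t0) with hlam_def
    set lam' := (a - t0) / (b - t0) with hlam'_def
    have hlam : 0 < lam := div_pos (by linarith) hden
    have hlam' : 0 < lam' := div_pos (by linarith) hden
    have hsum : lam + lam' = 1 := by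
      rw [hlam_def, hlam'_def, ← add_div, div_eq_one_iff_eq hden.ne']
      ring
    have hcombo : lam • t0 + lam' • b = a := by
      simp only [smul_eq_mul, hlam_def, hlam'_def]
      field_simp
      ring
    have key := hcv.2 (mem_Ici.mpr ht0) (mem_Ici.mpr hb1) ht0b hlam hlam' hsum
    rw [hcombo] at key
    have hmb : h c0 t0 ≤ h c0 b := hmin b hb1
    have h4 : lam * h c0 t0 ≤ lam * h c0 b := mul_le_mul_of_nonneg_left hmb hlam.le
    have h5 : lam * h c0 b + lam' * h c0 b = h c0 b := by rw [← add_mul, hsum, one_mul]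
    simp only [smul_eq_mul] at key
    linarith

lemma h_continuousOn {c0 a b : ℝ} (ha : 0 < a) : ContinuousOn (h c0) (Icc a b) := by
  have hlog : ContinuousOn Real.log (Icc a b) := by
    apply Real.continuousOn_log.mono
    intro x hx
    simp only [mem_compl_iff, mem_singleton_iff]
    exact ne_of_gt (lt_of_lt_of_le ha hx.1)
  exact (((continuous_const.mul continuous_id).sub continuous_const).continuousOn.mul hlog).sub
    continuousOn_const

lemma h_exists_large {c0 t0 : ℝ} (hc0 : 0 < c0) (y : ℝ) : ∃ T, t0 ≤ T ∧ y ≤ h c0 T := by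
  refine ⟨max t0 (max 3 ((|y| + 2) / c0)), le_max_left _ _, ?_⟩
  set T := max t0 (max 3 ((|y| + 2) / c0)) with hT_def
  have hT3 : (3:ℝ) ≤ T := le_trans (le_max_left _ _) (le_max_right _ _)
  have hTc : (|y| + 2) / c0 ≤ T := le_trans (le_max_right _ _) (le_max_right _ _)
  have hTpos : (0:ℝ) < T := by linarith
  have hlogT : (1:ℝ) ≤ Real.log T := by
    rw [Real.le_log_iff_exp_le hTpos]
    have := Real.exp_one_lt_d9
    linarith
  have hcT : |y| + 2 ≤ c0 * T := by
    rw [div_le_iff₀ hc0] at hTc; linarith [hTc]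
  have hy : y ≤ |y| := le_abs_self y
  simp only [h]
  nlinarith [mul_nonneg (by linarith [abs_nonneg y] : (0:ℝ) ≤ c0 * T - 1)
    (by linarith : (0:ℝ) ≤ Real.log T - 1), abs_nonneg y]

lemma hstarInv_spec {c0 t0 : ℝ} (hc0 : 0 < c0) (ht0 : 1 ≤ t0)
    (hmin : ∀ t ∈ Ici (1:ℝ), h c0 t0 ≤ h c0 t) {y : ℝ} (hy : h c0 t0 ≤ y) :
    t0 ≤ hstarInv c0 t0 y ∧ h c0 (hstarInv c0 t0 y) = y := by
  obtain ⟨T, hT, hyT⟩ := h_exists_large (t0 := t0) hc0 y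
  have hmono := h_strictMonoOn hc0 ht0 hmin
  have hcont : ContinuousOn (h c0) (Icc t0 T) := h_continuousOn (lt_of_lt_of_le one_pos ht0)
  obtain ⟨s, hs, hhs⟩ := intermediate_value_Icc hT hcont ⟨hy, hyT⟩
  have hSet : {t : ℝ | t0 ≤ t ∧ y ≤ h c0 t} = Ici s := by
    ext t
    simp only [mem_setOf_eq, mem_Ici]
    constructor
    · rintro ⟨h1, h2⟩
      by_contra hlt
      push_neg at hlt
      have := hmono (mem_Ici.mpr h1) (mem_Ici.mpr hs.1) hlt
      rw [hhs] at this
      linarith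
    · intro hts
      refine ⟨le_trans hs.1 hts, ?_⟩
      rw [← hhs]
      exact hmono.monotoneOn (mem_Ici.mpr hs.1) (mem_Ici.mpr (le_trans hs.1 hts)) hts
  rw [hstarInv, hSet, csInf_Ici]
  exact ⟨hs.1, hhs⟩

/-- Change-of-variables identity for the censored Weibull model: with
`t0 = argmin_{t ≥ 1} h t`, `x0 = t0^(1/d0)`, `v0 = h(x0^d1) ≤ v < u`, `α ∈ [d0, d1]`,
and `F_W*` the law of `max(X, x0)` for `X` Weibull`(c0, α0)`,
`∫_{x0}^∞ [h*(y^α)]ᵥᵘ dF_W*(y; α0) = v + ∫ᵥᵘ exp(-c0 ((h*)^←(t))^(α0/α)) dt`. -/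
theorem stmt13 (c0 d0 d1 α0 α v u t0 : ℝ) (hc0 : 0 < c0) (hd0 : 0 < d0) (hdd : d0 ≤ d1)
    (hα0 : α0 ∈ Icc d0 d1) (hα : α ∈ Icc d0 d1)
    (ht0 : t0 ∈ Ici (1:ℝ)) (hmin : ∀ t ∈ Ici (1:ℝ), h c0 t0 ≤ h c0 t)
    (hv : h c0 ((t0 ^ (1 / d0)) ^ d1) ≤ v) (hvu : v < u)
    (μ : Measure ℝ) [IsProbabilityMeasure μ]
    (hcdf : ∀ x ≥ t0 ^ (1 / d0), μ (Iic x) = ENNReal.ofReal (1 - Real.exp (-c0 * x ^ α0)))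
    (hcdf0 : ∀ x < t0 ^ (1 / d0), μ (Iic x) = 0) :
    ∫ y, trunc v u (h c0 (y ^ α)) ∂μ
      = v + ∫ t in v..u, Real.exp (-c0 * (hstarInv c0 t0 t) ^ (α0 / α)) := by
  rw [mem_Ici] at ht0
  have hα_pos : 0 < α := lt_of_lt_of_le hd0 hα.1
  have hα0_pos : 0 < α0 := lt_of_lt_of_le hd0 hα0.1
  have ht0_pos : 0 < t0 := lt_of_lt_of_le one_pos ht0
  set x0 := t0 ^ (1 / d0) with hx0_def
  have hx0_one : 1 ≤ x0 := Real.one_le_rpow ht0 (by positivity)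
  have hx0_pos : 0 < x0 := lt_of_lt_of_le one_pos hx0_one
  have hmono := h_strictMonoOn hc0 ht0 hmin
  -- x0 ^ e ≥ t0 for d0 ≤ e
  have hx0e : ∀ e, d0 ≤ e → t0 ≤ x0 ^ e := by
    intro e he
    have h1 : x0 ^ e = t0 ^ (1 / d0 * e) := (Real.rpow_mul ht0_pos.le _ _).symm
    rw [h1]
    calc t0 = t0 ^ (1:ℝ) := (Real.rpow_one t0).symm
    _ ≤ t0 ^ (1 / d0 * e) := by
        apply Real.rpow_le_rpow_of_exponent_le ht0
        rw [one_div_mul_eq_div, le_div_iff₀ hd0]; linarith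
  have hxα_le : x0 ^ α ≤ x0 ^ d1 := Real.rpow_le_rpow_of_exponent_le hx0_one hα.2
  have hvα : h c0 (x0 ^ α) ≤ v :=
    le_trans (hmono.monotoneOn (mem_Ici.mpr (hx0e α hα.1)) (mem_Ici.mpr (hx0e d1 hdd)) hxα_le) hv
  have hht0v : h c0 t0 ≤ v :=
    le_trans (hmin _ (mem_Ici.mpr (le_trans ht0 (hx0e d1 hdd)))) hv
  -- the null set below x0
  have hnull : μ (Iio x0) = 0 := by
    have hsub : Iio x0 ⊆ ⋃ n : ℕ, Iic (x0 - 1 / ((n:ℝ) + 1)) := by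
      intro a ha
      obtain ⟨n, hn⟩ := exists_nat_one_div_lt (show (0:ℝ) < x0 - a from sub_pos.2 ha)
      exact mem_iUnion.2 ⟨n, by simp only [mem_Iic]; linarith⟩
    refine le_antisymm (le_trans (measure_mono hsub) (le_of_eq ?_)) zero_le
    refine measure_iUnion_null fun n => hcdf0 _ ?_
    have : (0:ℝ) < 1 / ((n:ℝ) + 1) := by positivity
    linarith
  have hIcic : μ (Ici x0)ᶜ = 0 := by rwa [compl_Ici]
  set g : ℝ → ℝ := fun y => trunc v u (h c0 (y ^ α)) with hg_def
  have hg_meas : Measurable g := by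
    have hrpow : Measurable fun y : ℝ => y ^ α :=
      (Real.continuous_rpow_const hα_pos.le).measurable
    have h1 : Measurable fun y : ℝ => h c0 (y ^ α) := by
      simp only [h]
      exact (((measurable_const.mul hrpow).sub measurable_const).mul
        (Real.measurable_log.comp hrpow)).sub measurable_const
    exact (h1.max measurable_const).min measurable_const
  have hgv : ∀ y, v ≤ g y := fun y => le_min (le_max_right _ _) hvu.le
  have hgu : ∀ y, g y ≤ u := fun y => min_le_right _ _
  have hg_int : Integrable g μ := by
    refine Integrable.mono' (integrable_const (max |v| |u|)) hg_meas.aestronglyMeasurable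
      (ae_of_all _ fun y => ?_)
    rw [Real.norm_eq_abs, abs_le]
    constructor
    · linarith [hgv y, le_max_left |v| |u|, neg_abs_le v]
    · linarith [hgu y, le_abs_self u, le_max_right |v| |u|]
  set f : ℝ → ℝ := fun y => g y - v with hf_def
  have hf_int : Integrable f μ := hg_int.sub (integrable_const v)
  have hsplit : ∫ y, g y ∂μ = v + ∫ y, f y ∂μ := by
    rw [hf_def]
    rw [integral_sub hg_int (integrable_const v), integral_const]
    simp [measure_univ]
  set M := u - v with hM_def
  have hM_pos : 0 < M := by simp [hM_def]; linarith
  have hlayer : ∫ y, f y ∂μ = ∫ t in Ioc 0 M, (μ {a | t ≤ f a}).toReal :=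
    hf_int.integral_eq_integral_Ioc_meas_le
      (ae_of_all _ fun y => sub_nonneg.2 (hgv y))
      (ae_of_all _ fun y => by simp only [hf_def, hM_def]; linarith [hgu y])
  -- key pointwise computation
  have key : ∀ t ∈ Ioo (0:ℝ) M, (μ {a | t < f a}).toReal
      = Real.exp (-c0 * (hstarInv c0 t0 (v + t)) ^ (α0 / α)) := by
    intro t ht
    set c := v + t with hc_def
    have hc1 : v < c := by simp [hc_def]; linarith [ht.1]
    have hc2 : c < u := by simp only [hc_def]; have := ht.2; simp only [hM_def] at this; linarith
    obtain ⟨hs0, hsc⟩ := hstarInv_spec hc0 ht0 hmin (le_trans hht0v hc1.le)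
    set s := hstarInv c0 t0 c with hs_def
    have hs_pos : 0 < s := lt_of_lt_of_le ht0_pos hs0
    have hs_gt : x0 ^ α < s := by
      by_contra hcon
      push_neg at hcon
      have := hmono.monotoneOn (mem_Ici.mpr hs0) (mem_Ici.mpr (hx0e α hα.1)) hcon
      rw [hsc] at this
      linarith
    set r := s ^ (1 / α) with hr_def
    have hr_ge : x0 ≤ r := by
      have h1 : x0 = (x0 ^ α) ^ (1/α) := by
        rw [← Real.rpow_mul hx0_pos.le, mul_one_div, div_self hα_pos.ne', Real.rpow_one]
      rw [h1, hr_def]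
      exact Real.rpow_le_rpow (by positivity) hs_gt.le (by positivity)
    have hr_pos : 0 < r := lt_of_lt_of_le hx0_pos hr_ge
    have hset : {a : ℝ | t < f a} ∩ Ici x0 = Ioi r := by
      ext a
      simp only [mem_inter_iff, mem_setOf_eq, mem_Ici, mem_Ioi]
      constructor
      · rintro ⟨h1, h2⟩
        have hga : c < g a := by simp only [hf_def] at h1; simp only [hc_def]; linarith
        have hha : c < h c0 (a ^ α) := by
          have hmax : c < max (h c0 (a ^ α)) v :=
            lt_of_lt_of_le hga (min_le_left _ _)
          exact (lt_max_iff.mp hmax).resolve_right (by linarith)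
        have ha_pos : 0 < a := lt_of_lt_of_le hx0_pos h2
        have haα : t0 ≤ a ^ α :=
          le_trans (hx0e α hα.1) (Real.rpow_le_rpow hx0_pos.le h2 hα_pos.le)
        have hsa : s < a ^ α := by
          by_contra hcon
          push_neg at hcon
          have := hmono.monotoneOn (mem_Ici.mpr haα) (mem_Ici.mpr hs0) hcon
          rw [hsc] at this
          linarith
        have : r < (a ^ α) ^ (1/α) := Real.rpow_lt_rpow hs_pos.le hsa (by positivity)
        rwa [← Real.rpow_mul ha_pos.le, mul_one_div, div_self hα_pos.ne', Real.rpow_one] at this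
      · intro hra
        have ha_pos : 0 < a := lt_trans hr_pos hra
        have h2 : x0 ≤ a := le_trans hr_ge hra.le
        have hsa : s < a ^ α := by
          have h3 : r ^ α < a ^ α := Real.rpow_lt_rpow hr_pos.le hra hα_pos
          rwa [hr_def, ← Real.rpow_mul hs_pos.le, one_div_mul_cancel hα_pos.ne',
            Real.rpow_one] at h3
        have hha : c < h c0 (a ^ α) := by
          have := hmono (mem_Ici.mpr hs0) (mem_Ici.mpr (le_trans hs0 hsa.le)) hsa
          rwa [hsc] at this
        refine ⟨?_, h2⟩
        have hga : c < g a := lt_min (lt_of_lt_of_le hha (le_max_left _ _)) hc2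
        simp only [hf_def]
        simp only [hc_def] at hga
        linarith
    have he_le : Real.exp (-c0 * r ^ α0) ≤ 1 := by
      rw [Real.exp_le_one_iff]
      have : (0:ℝ) ≤ r ^ α0 := Real.rpow_nonneg hr_pos.le _
      nlinarith
    have he_pos : (0:ℝ) < Real.exp (-c0 * r ^ α0) := Real.exp_pos _
    have hμ : μ {a : ℝ | t < f a} = ENNReal.ofReal (Real.exp (-c0 * r ^ α0)) := by
      rw [← measure_inter_conull hIcic, hset, ← compl_Iic,
        measure_compl measurableSet_Iic (measure_ne_top μ _), measure_univ,
        hcdf r hr_ge, ← ENNReal.ofReal_one,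
        ← ENNReal.ofReal_sub _ (by linarith : (0:ℝ) ≤ 1 - Real.exp (-c0 * r ^ α0))]
      congr 1
      ring
    rw [hμ, ENNReal.toReal_ofReal he_pos.le]
    congr 1
    rw [hr_def, ← Real.rpow_mul hs_pos.le]
    congr 1
    field_simp
  -- assemble everything
  calc ∫ y, trunc v u (h c0 (y ^ α)) ∂μ = v + ∫ y, f y ∂μ := hsplit
  _ = v + ∫ t in Ioc 0 M, (μ {a | t ≤ f a}).toReal := by rw [hlayer]
  _ = v + ∫ t in Ioc 0 M, (μ {a | t < f a}).toReal := by
      congr 1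
      apply integral_congr_ae
      filter_upwards [meas_le_ae_eq_meas_lt μ (volume.restrict (Ioc 0 M)) f] with t ht
      rw [ht]
  _ = v + ∫ t in Ioc 0 M, Real.exp (-c0 * (hstarInv c0 t0 (v + t)) ^ (α0 / α)) := by
      congr 1
      rw [← setIntegral_congr_set Ioo_ae_eq_Ioc, ← setIntegral_congr_set Ioo_ae_eq_Ioc]
      exact setIntegral_congr_fun measurableSet_Ioo fun t ht => key t ht
  _ = v + ∫ t in v..u, Real.exp (-c0 * (hstarInv c0 t0 t) ^ (α0 / α)) := by
      congr 1
      rw [← intervalIntegral.integral_of_le hM_pos.le,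
        intervalIntegral.integral_comp_add_left
          (fun t => Real.exp (-c0 * (hstarInv c0 t0 t) ^ (α0 / α))) v]
      norm_num [hM_def]
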